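/- arXiv:2102.07987 — 2 statements merged into one kernel-verified Lean document; each statement's English description precedes it below -/
import Mathlib

section
/- Let A_1,...,A_T be vectors in R^d with ||A_t||_2 ≤ 1, λ ≥ 1, and define Σ_t^{-1} = λI_d + Σ_{τ=1}^{t-1} A_τ A_τ^T. Then Σ_{t=1}^T A_t^T Σ_t A_t ≤ 2 log(det Σ_1 / det Σ_{T+1}) ≤ 2d log(1 + T/(λd)). -/
open Matrix

section EllipticalAux

lemma ellip_psd_vecMulVec {d : ℕ} (u : Fin d → ℝ) : (vecMulVec u u).PosSemidef := by
  refine PosSemidef.of_dotProduct_mulVec_nonneg ?_ ?_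
  · ext i j
    simp [vecMulVec_apply, conjTranspose_apply, mul_comm]
  · intro x
    have h : star x ⬝ᵥ (vecMulVec u u *ᵥ x) = (u ⬝ᵥ x) * (u ⬝ᵥ x) := by
      simp only [star_trivial, dotProduct, mulVec, vecMulVec_apply, Finset.sum_mul_sum]
      rw [Finset.sum_comm]
      refine Finset.sum_congr rfl fun i _ => ?_
      rw [Finset.mul_sum]
      refine Finset.sum_congr rfl fun j _ => ?_
      ring
    rw [h]
    exact mul_self_nonneg _

lemma ellip_psd_sum {d : ℕ} (A : ℕ → Fin d → ℝ) (t : ℕ) :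
    (∑ τ ∈ Finset.range t, vecMulVec (A τ) (A τ)).PosSemidef := by
  induction t with
  | zero => simpa using Matrix.PosSemidef.zero
  | succ n ih =>
    rw [Finset.sum_range_succ]
    exact ih.add (ellip_psd_vecMulVec _)

lemma ellip_posdef_smul_one {d : ℕ} {lam : ℝ} (h : 0 < lam) :
    (lam • (1 : Matrix (Fin d) (Fin d) ℝ)).PosDef := by
  refine PosDef.of_dotProduct_mulVec_pos ?_ ?_
  · unfold Matrix.IsHermitian
    simp [conjTranspose_smul]
  · intro x hx
    have heq : star x ⬝ᵥ ((lam • (1 : Matrix (Fin d) (Fin d) ℝ)) *ᵥ x) = lam * (x ⬝ᵥ x) := by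
      simp [smul_mulVec, dotProduct_smul]
    rw [heq]
    have hxx : 0 < x ⬝ᵥ x := by
      have := Matrix.dotProduct_star_self_pos_iff (v := x)
      simpa using this.mpr hx
    positivity

lemma ellip_key_log (u : ℝ) (h0 : 0 ≤ u) (h1 : u ≤ 1) : u ≤ 2 * Real.log (1 + u) := by
  have hpos : (0:ℝ) < 1 + u := by linarith
  have h2 : u / 2 ≤ Real.log (1 + u) := by
    rw [Real.le_log_iff_exp_le hpos]
    set E := Real.exp (u / 2) with hE
    have hEpos : 0 < E := Real.exp_pos _
    have key : E * (1 - u / 2) ≤ 1 := by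
      have h3 : 1 - u/2 ≤ Real.exp (-(u/2)) := by
        have := Real.add_one_le_exp (-(u/2)); linarith
      have h4 : Real.exp (-(u/2)) = 1 / E := by
        rw [Real.exp_neg, one_div]
      rw [h4] at h3
      calc E * (1 - u/2) ≤ E * (1/E) := mul_le_mul_of_nonneg_left h3 hEpos.le
        _ = 1 := by field_simp
    nlinarith [key, hEpos, h0, h1]
  linarith

lemma ellip_trace_eq_sum_eig {d : ℕ} {B : Matrix (Fin d) (Fin d) ℝ} (hB : B.IsHermitian) :
    B.trace = ∑ i, hB.eigenvalues i := by
  conv_lhs => rw [hB.spectral_theorem]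
  rw [Unitary.conjStarAlgAut_apply, Matrix.trace_mul_cycle]
  rw [(Matrix.mem_unitaryGroup_iff').mp (Matrix.IsHermitian.eigenvectorUnitary hB).2,
    Matrix.one_mul]
  simp [Matrix.trace, Matrix.diag]

lemma ellip_det_eq_prod_eig {d : ℕ} {B : Matrix (Fin d) (Fin d) ℝ} (hB : B.IsHermitian) :
    B.det = ∏ i, hB.eigenvalues i := by
  simpa using hB.det_eq_prod_eigenvalues

lemma ellip_det_le_trace_pow {d : ℕ} (hd : 0 < d) {B : Matrix (Fin d) (Fin d) ℝ}
    (hB : B.PosDef) : B.det ≤ (B.trace / d) ^ d := by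
  have hH := hB.isHermitian
  have hev : ∀ i, 0 < hH.eigenvalues i := hB.eigenvalues_pos
  have hdR : (0:ℝ) < d := by exact_mod_cast hd
  have hw : ∑ _i : Fin d, (1/(d:ℝ)) = 1 := by
    simp [Finset.sum_const]
    field_simp
  have amgm := Real.geom_mean_le_arith_mean_weighted Finset.univ (fun _ => 1/(d:ℝ))
      (fun i => hH.eigenvalues i) (fun i _ => by positivity) hw (fun i _ => (hev i).le)
  have hprod : ∏ i, hH.eigenvalues i = (∏ i, (hH.eigenvalues i) ^ (1/(d:ℝ))) ^ d := by
    rw [← Finset.prod_pow]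
    refine Finset.prod_congr rfl fun i _ => ?_
    rw [← Real.rpow_natCast ((hH.eigenvalues i) ^ (1/(d:ℝ))) d, ← Real.rpow_mul (hev i).le]
    rw [one_div, inv_mul_cancel₀ hdR.ne', Real.rpow_one]
  have hsum : ∑ i, (1/(d:ℝ)) * hH.eigenvalues i = B.trace / d := by
    rw [ellip_trace_eq_sum_eig hH, Finset.sum_div]
    refine Finset.sum_congr rfl fun i _ => ?_
    ring
  calc B.det = (∏ i, (hH.eigenvalues i) ^ (1/(d:ℝ))) ^ d := by
        rw [ellip_det_eq_prod_eig hH, hprod]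
    _ ≤ (∑ i, (1/(d:ℝ)) * hH.eigenvalues i) ^ d :=
        pow_le_pow_left₀ (Finset.prod_nonneg fun i _ => Real.rpow_nonneg (hev i).le _) amgm d
    _ = (B.trace / d) ^ d := by rw [hsum]

lemma ellip_det_step {d : ℕ} (M : Matrix (Fin d) (Fin d) ℝ) (hM : IsUnit M.det)
    (u : Fin d → ℝ) :
    (M + vecMulVec u u).det = M.det * (1 + u ⬝ᵥ (M⁻¹ *ᵥ u)) := by
  rw [vecMulVec_eq Unit, Matrix.det_add_replicateCol_mul_replicateRow hM]
  congr 1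
  rw [Matrix.det_unique, Matrix.add_apply, Matrix.one_apply_eq,
    Matrix.mul_assoc, ← Matrix.replicateCol_mulVec, Matrix.replicateRow_mul_replicateCol_apply]

end EllipticalAux

/-- Classical elliptical potential lemma (actions indexed from 0, so that
`Σ t = (λ I + ∑_{τ<t} A_τ A_τᵀ)⁻¹` plays the role of `Σ_{t+1}` in 1-based notation). -/
theorem elliptical_potential_classical {d T : ℕ} (hd : 0 < d)
    (A : ℕ → Fin d → ℝ) (hA : ∀ t, (A t) ⬝ᵥ (A t) ≤ 1)
    (lam : ℝ) (hlam : 1 ≤ lam)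
    (Sig : ℕ → Matrix (Fin d) (Fin d) ℝ)
    (hSig : ∀ t, Sig t = (lam • (1 : Matrix (Fin d) (Fin d) ℝ) +
      ∑ τ ∈ Finset.range t, Matrix.vecMulVec (A τ) (A τ))⁻¹) :
    (∑ t ∈ Finset.range T, (A t) ⬝ᵥ ((Sig t) *ᵥ (A t)) ≤
        2 * Real.log ((Sig 0).det / (Sig T).det)) ∧
    2 * Real.log ((Sig 0).det / (Sig T).det) ≤
        2 * d * Real.log (1 + T / (lam * d)) := by
  have hlam0 : (0:ℝ) < lam := lt_of_lt_of_le one_pos hlam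
  set M : ℕ → Matrix (Fin d) (Fin d) ℝ := fun t =>
    lam • (1 : Matrix (Fin d) (Fin d) ℝ) + ∑ τ ∈ Finset.range t, vecMulVec (A τ) (A τ)
    with hMdef
  have hMpos : ∀ t, (M t).PosDef := fun t =>
    (ellip_posdef_smul_one hlam0).add_posSemidef (ellip_psd_sum A t)
  have hdet : ∀ t, 0 < (M t).det := fun t => (hMpos t).det_pos
  have hSigM : ∀ t, Sig t = (M t)⁻¹ := hSig
  set u : ℕ → ℝ := fun t => A t ⬝ᵥ (Sig t *ᵥ A t) with hu
  -- nonnegativity of u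
  have hu0 : ∀ t, 0 ≤ u t := by
    intro t
    have h := ((hMpos t).inv).posSemidef.dotProduct_mulVec_nonneg (A t)
    rw [hu]
    simpa [hSigM t] using h
  -- u t ≤ 1
  have hu1 : ∀ t, u t ≤ 1 := by
    intro t
    set y := Sig t *ᵥ A t with hy
    have hMy : M t *ᵥ y = A t := by
      rw [hy, hSigM t, mulVec_mulVec,
        Matrix.mul_nonsing_inv _ (isUnit_iff_ne_zero.mpr (hdet t).ne'), one_mulVec]
    have hyy : 0 ≤ y ⬝ᵥ y := Finset.sum_nonneg fun i _ => mul_self_nonneg _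
    have hAA : 0 ≤ A t ⬝ᵥ A t := Finset.sum_nonneg fun i _ => mul_self_nonneg _
    have h1 : lam * (y ⬝ᵥ y) ≤ y ⬝ᵥ (M t *ᵥ y) := by
      have heq : y ⬝ᵥ (M t *ᵥ y) = lam * (y ⬝ᵥ y) +
          y ⬝ᵥ ((∑ τ ∈ Finset.range t, vecMulVec (A τ) (A τ)) *ᵥ y) := by
        simp [hMdef, add_mulVec, dotProduct_add, smul_mulVec]
      have hps := (ellip_psd_sum A t).dotProduct_mulVec_nonneg y
      rw [heq]
      simp only [star_trivial] at hps
      linarith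
    have h2 : u t = y ⬝ᵥ (M t *ᵥ y) := by
      rw [hMy, hu, dotProduct_comm]
    have hCS : (u t)^2 ≤ (A t ⬝ᵥ A t) * (y ⬝ᵥ y) := by
      have h := Finset.sum_mul_sq_le_sq_mul_sq Finset.univ (A t) y
      have hut : u t = ∑ i, A t i * y i := rfl
      rw [hut]
      simpa [dotProduct, pow_two] using h
    nlinarith [h1, h2, hCS, hA t, hyy, hAA, hu0 t, hlam]
  -- determinant recursion
  have hdetstep : ∀ t, (M (t+1)).det = (M t).det * (1 + u t) := by
    intro t
    have hstep : M (t+1) = M t + vecMulVec (A t) (A t) := by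
      simp only [hMdef]
      rw [Finset.sum_range_succ, add_assoc]
    rw [hstep, ellip_det_step (M t) (isUnit_iff_ne_zero.mpr (hdet t).ne') (A t)]
    simp only [hu, hSigM t]
  -- log recursion and telescoping
  have htel : ∑ t ∈ Finset.range T, Real.log (1 + u t) =
      Real.log (M T).det - Real.log (M 0).det := by
    rw [← Finset.sum_range_sub (fun t => Real.log (M t).det)]
    refine Finset.sum_congr rfl fun t _ => ?_
    rw [hdetstep t, Real.log_mul (hdet t).ne' (by nlinarith [hu0 t])]
    ring
  have hratio : Real.log ((Sig 0).det / (Sig T).det) =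
      Real.log (M T).det - Real.log (M 0).det := by
    rw [hSigM 0, hSigM T, Matrix.det_nonsing_inv, Matrix.det_nonsing_inv]
    simp only [Ring.inverse_eq_inv']
    rw [inv_div_inv, Real.log_div (hdet T).ne' (hdet 0).ne']
  constructor
  · calc ∑ t ∈ Finset.range T, (A t) ⬝ᵥ ((Sig t) *ᵥ (A t))
        = ∑ t ∈ Finset.range T, u t := rfl
      _ ≤ ∑ t ∈ Finset.range T, 2 * Real.log (1 + u t) :=
          Finset.sum_le_sum fun t _ => ellip_key_log (u t) (hu0 t) (hu1 t)
      _ = 2 * ∑ t ∈ Finset.range T, Real.log (1 + u t) := by rw [Finset.mul_sum]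
      _ = 2 * (Real.log (M T).det - Real.log (M 0).det) := by rw [htel]
      _ = 2 * Real.log ((Sig 0).det / (Sig T).det) := by rw [hratio]
  · rw [hratio]
    have hdR : (0:ℝ) < d := by exact_mod_cast hd
    -- trace bound
    have htr : (M T).trace ≤ lam * d + T := by
      have hvv : ∀ (v : Fin d → ℝ), (vecMulVec v v).trace = v ⬝ᵥ v := fun v => by
        simp [Matrix.trace, Matrix.diag, vecMulVec_apply, dotProduct]
      have h1 : (M T).trace = lam * d +
          ∑ τ ∈ Finset.range T, (A τ ⬝ᵥ A τ) := by
        simp [hMdef, Matrix.trace_add, Matrix.trace_smul, Matrix.trace_one,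
          Matrix.trace_sum, hvv, smul_eq_mul]
      have h2 : ∑ τ ∈ Finset.range T, (A τ ⬝ᵥ A τ) ≤ T := by
        calc ∑ τ ∈ Finset.range T, (A τ ⬝ᵥ A τ) ≤ ∑ τ ∈ Finset.range T, (1:ℝ) :=
              Finset.sum_le_sum fun τ _ => hA τ
          _ = T := by simp
      linarith
    have htr0 : 0 ≤ (M T).trace / d := by
      have h := ellip_trace_eq_sum_eig (hMpos T).isHermitian
      have hne : Nonempty (Fin d) := ⟨⟨0, hd⟩⟩
      have hpos : 0 < (M T).trace := by
        rw [h]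
        exact Finset.sum_pos (fun i _ => (hMpos T).eigenvalues_pos i) Finset.univ_nonempty
      positivity
    have hdet0 : (M 0).det = lam ^ d := by
      simp [hMdef, Matrix.det_smul]
    have hlogdet0 : Real.log (M 0).det = d * Real.log lam := by
      rw [hdet0, Real.log_pow]
    have hub : (M T).det ≤ (lam + T/d) ^ d := by
      refine (ellip_det_le_trace_pow hd (hMpos T)).trans ?_
      refine pow_le_pow_left₀ htr0 ?_ d
      rw [div_le_iff₀ hdR]
      have : (lam + ↑T/↑d) * ↑d = lam * ↑d + ↑T := by field_simp
      rw [this]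
      exact htr
    have hlampos' : (0:ℝ) < lam + T/d := by positivity
    have hlogub : Real.log (M T).det ≤ (d:ℝ) * Real.log (lam + T/d) := by
      calc Real.log (M T).det ≤ Real.log ((lam + T/d) ^ d) :=
            Real.log_le_log (hdet T) hub
        _ = (d:ℝ) * Real.log (lam + T/d) := by rw [Real.log_pow]
    have hfin : Real.log (lam + T/d) - Real.log lam = Real.log (1 + T/(lam*d)) := by
      rw [← Real.log_div hlampos'.ne' hlam0.ne']
      have heq : (lam + ↑T/↑d)/lam = 1 + ↑T/(lam*↑d) := by
        field_simp
      rw [heq]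
    have hmain : Real.log (M T).det - Real.log (M 0).det ≤
        (d:ℝ) * Real.log (1 + T/(lam*d)) := by
      rw [← hfin, mul_sub, hlogdet0]
      linarith
    nlinarith [hmain]
end

section
/- Let Σ be a positive semidefinite d×d matrix, V ∈ R^d, x > 0, and define Σ' := Σ − (Σ V V^T Σ)/(1 + V^T Σ V). Then log(1 + V^T Σ V) + log det(I + x Σ') ≤ log det(I + (x + V^T V) Σ). -/
open Matrix

section
open scoped MatrixOrder
noncomputable def Matrix.PosSemidef.sqrt {n : Type*} [Fintype n] [DecidableEq n]
    {A : Matrix n n ℝ} (_hA : A.PosSemidef) : Matrix n n ℝ := CFC.sqrt A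
lemma Matrix.PosSemidef.posSemidef_sqrt {n : Type*} [Fintype n] [DecidableEq n]
    {A : Matrix n n ℝ} (hA : A.PosSemidef) : hA.sqrt.PosSemidef :=
  (CFC.sqrt_nonneg A).posSemidef
lemma Matrix.PosSemidef.sq_sqrt {n : Type*} [Fintype n] [DecidableEq n]
    {A : Matrix n n ℝ} (hA : A.PosSemidef) : hA.sqrt ^ 2 = A :=
  CFC.sq_sqrt A hA.nonneg
end

private lemma psd_smul {n : Type*} [Fintype n] {M : Matrix n n ℝ} (hM : M.PosSemidef)
    {a : ℝ} (ha : 0 ≤ a) : (a • M).PosSemidef := by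
  refine ⟨?_, fun y => ?_⟩
  · show (a • M)ᴴ = a • M
    rw [conjTranspose_smul, star_trivial, hM.1]
  · exact (hM.smul ha).2 y

private lemma one_le_det_one_add {n : Type*} [Fintype n] [DecidableEq n]
    {M : Matrix n n ℝ} (hM : M.PosSemidef) : 1 ≤ (1 + M).det := by
  have hH := hM.1
  have hsp := hH.spectral_theorem
  simp only [RCLike.ofReal_real_eq_id, Function.id_comp, Unitary.conjStarAlgAut_apply] at hsp
  set U : Matrix n n ℝ := (hH.eigenvectorUnitary : Matrix n n ℝ) with hUdef
  have hUU : U * star U = 1 := mem_unitaryGroup_iff.mp hH.eigenvectorUnitary.2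
  have hdetU : U.det * (star U).det = 1 := by rw [← det_mul, hUU, det_one]
  have h1 : (1 : Matrix n n ℝ) + M = U * (1 + diagonal hH.eigenvalues) * star U := by
    rw [Matrix.mul_add, Matrix.mul_one, Matrix.add_mul, hUU, ← hsp]
  have h2 : (1 + M).det = (1 + diagonal hH.eigenvalues).det := by
    rw [h1, det_mul, det_mul]
    calc U.det * (1 + diagonal hH.eigenvalues).det * (star U).det
        = (1 + diagonal hH.eigenvalues).det * (U.det * (star U).det) := by ring
      _ = (1 + diagonal hH.eigenvalues).det := by rw [hdetU, mul_one]
  rw [h2, ← diagonal_one, diagonal_add, det_diagonal]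
  calc (1:ℝ) = ∏ _i : n, 1 := by simp
    _ ≤ ∏ i, (1 + hH.eigenvalues) i := by
        refine Finset.prod_le_prod (fun i _ => by norm_num) (fun i _ => ?_)
        have := hM.eigenvalues_nonneg i
        simp only [Pi.add_apply, Pi.one_apply]
        linarith

private lemma det_mono {n : Type*} [Fintype n] [DecidableEq n]
    {P Q : Matrix n n ℝ} (hP : P.PosDef) (hQP : (Q - P).PosSemidef) : P.det ≤ Q.det := by
  have hPdet : IsUnit P.det := hP.det_pos.ne'.isUnit
  have hPinv : (P⁻¹).PosSemidef := hP.inv.posSemidef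
  set R := hPinv.sqrt with hR
  have hRR : R * R = P⁻¹ := by rw [← pow_two]; exact hPinv.sq_sqrt
  have h1 : Q.det = P.det * (1 + P⁻¹ * (Q - P)).det := by
    have hfac : P * (1 + P⁻¹ * (Q - P)) = Q := by
      rw [Matrix.mul_add, Matrix.mul_one, ← Matrix.mul_assoc,
        Matrix.mul_nonsing_inv _ hPdet, Matrix.one_mul]
      exact add_sub_cancel P Q
    calc Q.det = (P * (1 + P⁻¹ * (Q - P))).det := by rw [hfac]
      _ = P.det * (1 + P⁻¹ * (Q - P)).det := det_mul _ _
  have h2 : (1 + P⁻¹ * (Q - P)).det = (1 + R * (Q - P) * R).det := by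
    rw [← hRR, Matrix.mul_assoc, det_one_add_mul_comm]
  have h3 : (R * (Q - P) * R).PosSemidef := by
    have := hQP.mul_mul_conjTranspose_same R
    rwa [hPinv.posSemidef_sqrt.1] at this
  calc P.det = P.det * 1 := (mul_one _).symm
    _ ≤ P.det * (1 + R * (Q - P) * R).det :=
        mul_le_mul_of_nonneg_left (one_le_det_one_add h3) hP.det_pos.le
    _ = Q.det := by rw [← h2, ← h1]

/-- Log-det superadditivity under the rank-one Bayesian covariance update. -/
theorem logdet_rank_one_update {d : ℕ} {S : Matrix (Fin d) (Fin d) ℝ}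
    (hS : S.PosSemidef) (V : Fin d → ℝ) (x : ℝ) (hx : 0 < x) :
    Real.log (1 + V ⬝ᵥ (S *ᵥ V)) +
      Real.log ((1 + x • (S - (1 + V ⬝ᵥ (S *ᵥ V))⁻¹ •
        (S * Matrix.vecMulVec V V * S))).det) ≤
    Real.log ((1 + (x + V ⬝ᵥ V) • S).det) := by
  classical
  have hVSV : 0 ≤ V ⬝ᵥ (S *ᵥ V) := by simpa using hS.dotProduct_mulVec_nonneg V
  set c : ℝ := 1 + V ⬝ᵥ (S *ᵥ V) with hcdef
  have hc : 0 < c := by rw [hcdef]; linarith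
  have hSH : Sᵀ = S := by
    rw [← conjTranspose_eq_transpose_of_trivial]; exact hS.1
  have hSdot : ∀ (M : Matrix (Fin d) (Fin d) ℝ), Mᵀ = M →
      ∀ v z : Fin d → ℝ, v ⬝ᵥ (M *ᵥ z) = (M *ᵥ v) ⬝ᵥ z := by
    intro M hM v z
    rw [dotProduct_mulVec, ← mulVec_transpose, hM]
  set A := hS.sqrt with hAdef
  have hApsd : A.PosSemidef := hS.posSemidef_sqrt
  have hAH : Aᵀ = A := by
    rw [← conjTranspose_eq_transpose_of_trivial]; exact hApsd.1
  have hAA : A * A = S := by rw [← pow_two]; exact hS.sq_sqrt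
  set T : Matrix (Fin d) (Fin d) ℝ := 1 + x • S with hTdef
  have hTpd : T.PosDef := Matrix.PosDef.one.add_posSemidef (psd_smul hS hx.le)
  have hTdet : IsUnit T.det := hTpd.det_pos.ne'.isUnit
  have hAT : A * T = T * A := by
    rw [hTdef, Matrix.mul_add, Matrix.add_mul, Matrix.mul_one, Matrix.one_mul,
      Matrix.mul_smul, Matrix.smul_mul, ← hAA, Matrix.mul_assoc]
  have hTinvA : T⁻¹ * A = A * T⁻¹ := by
    calc T⁻¹ * A = T⁻¹ * A * (T * T⁻¹) := by
          rw [Matrix.mul_nonsing_inv _ hTdet, Matrix.mul_one]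
      _ = T⁻¹ * (A * T) * T⁻¹ := by simp only [Matrix.mul_assoc]
      _ = T⁻¹ * (T * A) * T⁻¹ := by rw [hAT]
      _ = (T⁻¹ * T) * (A * T⁻¹) := by simp only [Matrix.mul_assoc]
      _ = A * T⁻¹ := by rw [Matrix.nonsing_inv_mul _ hTdet, Matrix.one_mul]
  have hkey : S * T⁻¹ + x • (S * T⁻¹ * S) = S := by
    calc S * T⁻¹ + x • (S * T⁻¹ * S) = S * T⁻¹ * (1 + x • S) := by
          rw [Matrix.mul_add, Matrix.mul_one, Matrix.mul_smul]
      _ = S * T⁻¹ * T := by rw [hTdef]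
      _ = S := by rw [Matrix.mul_assoc, Matrix.nonsing_inv_mul _ hTdet, Matrix.mul_one]
  set u : Fin d → ℝ := S *ᵥ V with hudef
  set w : Fin d → ℝ := A *ᵥ V with hwdef
  set β : ℝ := u ⬝ᵥ (T⁻¹ *ᵥ u) with hβdef
  set γ : ℝ := w ⬝ᵥ (T⁻¹ *ᵥ w) with hγdef
  -- γ = VᵀST⁻¹V
  have hATA : A * (T⁻¹ * A) = S * T⁻¹ := by
    rw [hTinvA, ← Matrix.mul_assoc, hAA]
  have hγ : γ = V ⬝ᵥ ((S * T⁻¹) *ᵥ V) := by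
    rw [hγdef, hwdef, mulVec_mulVec, ← hSdot A hAH, mulVec_mulVec, hATA]
  have hβ : x • (V ⬝ᵥ ((S * T⁻¹ * S) *ᵥ V)) = x * β := by
    rw [hβdef, hudef, smul_eq_mul]
    congr 1
    rw [Matrix.mul_assoc, ← mulVec_mulVec, hSdot S hSH, mulVec_mulVec]
  have hscal : V ⬝ᵥ (S *ᵥ V) = γ + x * β := by
    have h := congrArg (fun M : Matrix (Fin d) (Fin d) ℝ => V ⬝ᵥ (M *ᵥ V)) hkey
    simp only [Matrix.add_mulVec, dotProduct_add, smul_mulVec, dotProduct_smul] at h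
    rw [← h, hγ, hβ]
  -- rewrite rank one matrices
  have hu2 : V ᵥ* S = u := by rw [hudef, ← mulVec_transpose, hSH]
  have hvmv : S * Matrix.vecMulVec V V * S = Matrix.replicateCol Unit u * Matrix.replicateRow Unit u := by
    rw [vecMulVec_eq Unit, Matrix.mul_assoc, Matrix.mul_assoc, ← Matrix.replicateRow_vecMul, hu2,
      ← Matrix.mul_assoc, ← Matrix.replicateCol_mulVec, ← hudef]
  have hM1 : (1 : Matrix (Fin d) (Fin d) ℝ) + x • (S - c⁻¹ • (S * Matrix.vecMulVec V V * S))
      = T + (-(x * c⁻¹)) • (Matrix.replicateCol Unit u * Matrix.replicateRow Unit u) := by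
    rw [hvmv, hTdef]
    module
  -- first determinant identity
  have hentry : ∀ (a : ℝ) (v : Fin d → ℝ),
      (1 + Matrix.replicateRow Unit v * T⁻¹ * Matrix.replicateCol Unit (a • v)).det = 1 + a * (v ⬝ᵥ (T⁻¹ *ᵥ v)) := by
    intro a v
    rw [det_unique, Matrix.mul_assoc, ← Matrix.replicateCol_mulVec, Matrix.add_apply,
      Matrix.one_apply_eq, Matrix.replicateRow_mul_replicateCol_apply, mulVec_smul, dotProduct_smul, smul_eq_mul]
  have hdet1 : (T + (-(x * c⁻¹)) • (Matrix.replicateCol Unit u * Matrix.replicateRow Unit u)).det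
      = T.det * (1 + (-(x * c⁻¹)) * β) := by
    have h := det_add_replicateCol_mul_replicateRow (ι := Unit) hTdet ((-(x * c⁻¹)) • u) u
    rw [Matrix.replicateCol_smul, Matrix.smul_mul] at h
    rw [h, ← Matrix.replicateCol_smul, hentry]
  have hdet2 : (T + Matrix.replicateCol Unit w * Matrix.replicateRow Unit w).det = T.det * (1 + γ) := by
    have h := det_add_replicateCol_mul_replicateRow (ι := Unit) hTdet w w
    have hw1 : w = (1 : ℝ) • w := (one_smul _ _).symm
    rw [h]
    nth_rewrite 2 [hw1]
    rw [hentry, one_mul]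
  -- product identity
  have hprod : c * (T + (-(x * c⁻¹)) • (Matrix.replicateCol Unit u * Matrix.replicateRow Unit u)).det
      = (T + Matrix.replicateCol Unit w * Matrix.replicateRow Unit w).det := by
    rw [hdet1, hdet2]
    have : c * (1 + (-(x * c⁻¹)) * β) = 1 + γ := by
      have hcv : c = 1 + (γ + x * β) := by rw [hcdef, hscal]
      field_simp
      rw [hcv]; ring
    calc c * (T.det * (1 + (-(x * c⁻¹)) * β)) = T.det * (c * (1 + (-(x * c⁻¹)) * β)) := by ring
      _ = T.det * (1 + γ) := by rw [this]
  -- W = col w * row w is PSD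
  have hWpsd : (Matrix.replicateCol Unit w * Matrix.replicateRow Unit w).PosSemidef := by
    have hrw : (Matrix.replicateRow Unit w)ᴴ = Matrix.replicateCol Unit w := by
      rw [conjTranspose_replicateRow, star_trivial]
    rw [← hrw]
    exact posSemidef_conjTranspose_mul_self _
  have hTWpd : (T + Matrix.replicateCol Unit w * Matrix.replicateRow Unit w).PosDef :=
    hTpd.add_posSemidef hWpsd
  -- comparison matrix
  have hWquad : ∀ y : Fin d → ℝ,
      y ⬝ᵥ ((Matrix.replicateCol Unit w * Matrix.replicateRow Unit w) *ᵥ y) = (w ⬝ᵥ y) ^ 2 := by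
    intro y
    rw [← mulVec_mulVec, replicateRow_mulVec_eq_const]
    have : Matrix.replicateCol Unit w *ᵥ Function.const Unit (w ⬝ᵥ y) = (w ⬝ᵥ y) • w := by
      ext i
      simp [Matrix.mulVec, Matrix.replicateCol, dotProduct, mul_comm]
    rw [this, dotProduct_smul, smul_eq_mul, dotProduct_comm, sq]
  have hCS : ∀ y : Fin d → ℝ, (w ⬝ᵥ y) ^ 2 ≤ (V ⬝ᵥ V) * (y ⬝ᵥ (S *ᵥ y)) := by
    intro y
    have hwy : w ⬝ᵥ y = V ⬝ᵥ (A *ᵥ y) := by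
      rw [hwdef, ← hSdot A hAH]
    have hzz : (A *ᵥ y) ⬝ᵥ (A *ᵥ y) = y ⬝ᵥ (S *ᵥ y) := by
      rw [← hSdot A hAH, mulVec_mulVec, hAA]
    have hcs := Finset.sum_mul_sq_le_sq_mul_sq Finset.univ V (A *ᵥ y)
    rw [hwy]
    calc (V ⬝ᵥ (A *ᵥ y)) ^ 2 = (∑ i, V i * (A *ᵥ y) i) ^ 2 := rfl
      _ ≤ (∑ i, V i ^ 2) * (∑ i, (A *ᵥ y) i ^ 2) := hcs
      _ = (V ⬝ᵥ V) * ((A *ᵥ y) ⬝ᵥ (A *ᵥ y)) := by simp [dotProduct, sq]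
      _ = (V ⬝ᵥ V) * (y ⬝ᵥ (S *ᵥ y)) := by rw [hzz]
  have hdiffpsd : ((1 + (x + V ⬝ᵥ V) • S) -
      (T + Matrix.replicateCol Unit w * Matrix.replicateRow Unit w)).PosSemidef := by
    have hdiff : (1 + (x + V ⬝ᵥ V) • S) - (T + Matrix.replicateCol Unit w * Matrix.replicateRow Unit w)
        = (V ⬝ᵥ V) • S - Matrix.replicateCol Unit w * Matrix.replicateRow Unit w := by
      rw [hTdef]; module
    rw [hdiff]
    refine PosSemidef.of_dotProduct_mulVec_nonneg ?_ (fun y => ?_)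
    · show _ᴴ = _
      simp [conjTranspose_sub, conjTranspose_smul, conjTranspose_mul,
        conjTranspose_replicateRow, conjTranspose_replicateCol, hS.1, hSH]
    · rw [star_trivial, sub_mulVec, dotProduct_sub, smul_mulVec, dotProduct_smul,
        smul_eq_mul, hWquad, sub_nonneg]
      exact hCS y
  -- final assembly
  have hDW : 0 < (T + Matrix.replicateCol Unit w * Matrix.replicateRow Unit w).det := hTWpd.det_pos
  have hM1det : 0 < (T + (-(x * c⁻¹)) • (Matrix.replicateCol Unit u * Matrix.replicateRow Unit u)).det := by
    have h : (T + (-(x * c⁻¹)) • (Matrix.replicateCol Unit u * Matrix.replicateRow Unit u)).det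
        = c⁻¹ * (T + Matrix.replicateCol Unit w * Matrix.replicateRow Unit w).det := by
      rw [← hprod, inv_mul_cancel_left₀ hc.ne']
    rw [h]
    positivity
  rw [hM1, ← Real.log_mul hc.ne' hM1det.ne', hprod]
  exact Real.log_le_log hDW (det_mono hTWpd hdiffpsd)
end
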